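/- For every λ ∈ F and every m ≥ 2, the set H = {x_1,…,x_m} ∪ {N_i : 1 ≤ i ≤ ℓ} ∪ {N_G(y_j) : ℓ < j ≤ m} is a block hsop for S with top class β = y_1⋯y_ℓ·y_{ℓ+1}³⋯y_m³; that is, the 2m elements of H are algebraically independent over F and the set of monomials dividing β is a basis of S as a free module over the subalgebra F[H] generated by H. -/

import Mathlib

set_option maxHeartbeats 1000000


/-!
STATEMENT 4: For the representation V_{m,λ} of the Klein four group G = ⟨σ1,σ2⟩ over a
field F of characteristic 2 (σ1(x_j)=σ2(x_j)=x_j, σ1(y_j)=y_j+x_j, σ2(y_1)=y_1+λx_1,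
σ2(y_j)=y_j+λx_j+x_{j−1} for j>1), for every λ ∈ F and m ≥ 2, with ℓ = ⌊m/2⌋, the set
H = {x_1,…,x_m} ∪ {N_i : 1 ≤ i ≤ ℓ} ∪ {N_G(y_j) : ℓ < j ≤ m} is a block hsop with top
class β = y_1⋯y_ℓ·y_{ℓ+1}³⋯y_m³: the 2m elements of H (as a family indexed by
Fin m ⊕ Fin m) are algebraically independent over F, and the monomials dividing β
(i.e. ∏ y_i^{d_i} with d_i ≤ 1 for i ≤ ℓ and d_i ≤ 3 for i > ℓ) form a basis of S as a
module over the subalgebra F[H].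
-/

open MvPolynomial

noncomputable section

/-- The variable x_i (1-based index); by convention 0 for i outside {1,…,m}. -/
def xv (F : Type) [Field F] (m : ℕ) (i : ℕ) : MvPolynomial (Fin m ⊕ Fin m) F :=
  if h : 1 ≤ i ∧ i ≤ m then X (Sum.inl ⟨i - 1, by omega⟩) else 0

/-- The variable y_i (1-based index); by convention 0 for i outside {1,…,m}. -/
def yv (F : Type) [Field F] (m : ℕ) (i : ℕ) : MvPolynomial (Fin m ⊕ Fin m) F :=
  if h : 1 ≤ i ∧ i ≤ m then X (Sum.inr ⟨i - 1, by omega⟩) else 0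

/-- n_i = y_i² + x_i y_i. -/
def nv (F : Type) [Field F] (m : ℕ) (i : ℕ) : MvPolynomial (Fin m ⊕ Fin m) F :=
  yv F m i ^ 2 + xv F m i * yv F m i

/-- u_{ab} = x_a y_b + x_b y_a. -/
def uv (F : Type) [Field F] (m : ℕ) (a b : ℕ) : MvPolynomial (Fin m ⊕ Fin m) F :=
  xv F m a * yv F m b + xv F m b * yv F m a

/-- N_i = n_i + (λ²+λ)·Σ_{j=1}^{i} u_{i−j+1,i+j} + Σ_{j=1}^{i−1} (u_{i−j,i+j} + u_{i−j,i+j−1}). -/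
def Nv (F : Type) [Field F] (m : ℕ) (lam : F) (i : ℕ) : MvPolynomial (Fin m ⊕ Fin m) F :=
  nv F m i + C (lam ^ 2 + lam) * ∑ j ∈ Finset.Icc 1 i, uv F m (i - j + 1) (i + j)
    + ∑ j ∈ Finset.Icc 1 (i - 1), (uv F m (i - j) (i + j) + uv F m (i - j) (i + j - 1))

/-- The norm N_G(y_j), the product of the distinct elements of the G-orbit
{y_j, y_j+x_j, y_j+λx_j+x_{j−1}, y_j+(λ+1)x_j+x_{j−1}} of y_j (these four elements are
pairwise distinct in every case in which the norm is used). -/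
def normYv (F : Type) [Field F] (m : ℕ) (lam : F) (j : ℕ) : MvPolynomial (Fin m ⊕ Fin m) F :=
  yv F m j * (yv F m j + xv F m j) * (yv F m j + C lam * xv F m j + xv F m (j - 1)) *
    (yv F m j + C (lam + 1) * xv F m j + xv F m (j - 1))

/-- t_j = u_{12}·x_{j−1} + u_{1j}·x_1. -/
def tv (F : Type) [Field F] (m : ℕ) (j : ℕ) : MvPolynomial (Fin m ⊕ Fin m) F :=
  uv F m 1 2 * xv F m (j - 1) + uv F m 1 j * xv F m 1

/-- The invariant subalgebra S^G for G = ⟨σ1, σ2⟩. -/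
def invSub {F : Type} [Field F] {τ : Type} (σ1 σ2 : MvPolynomial τ F ≃ₐ[F] MvPolynomial τ F) :
    Subalgebra F (MvPolynomial τ F) :=
  AlgHom.equalizer (σ1 : MvPolynomial τ F →ₐ[F] MvPolynomial τ F) (AlgHom.id F _) ⊓
    AlgHom.equalizer (σ2 : MvPolynomial τ F →ₐ[F] MvPolynomial τ F) (AlgHom.id F _)

/-- The transfer Tr(f) = Σ_{g ∈ G} g·f for the Klein four group G = {1, σ1, σ2, σ1σ2}. -/
def trf {F : Type} [Field F] {τ : Type} (σ1 σ2 : MvPolynomial τ F ≃ₐ[F] MvPolynomial τ F)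
    (f : MvPolynomial τ F) : MvPolynomial τ F :=
  f + σ1 f + σ2 f + σ1 (σ2 f)

/-- Products of two homogeneous G-invariants of positive degree; the span of this set over
S^G is (S^G_+)², the square of the ideal of S^G generated by the homogeneous invariants of
positive degree.  An invariant is *indecomposable* iff it does not lie in this span. -/
def decompSet {F : Type} [Field F] {τ : Type}
    (σ1 σ2 : MvPolynomial τ F ≃ₐ[F] MvPolynomial τ F) : Set (MvPolynomial τ F) :=
  {f | ∃ a b : MvPolynomial τ F,
    (σ1 a = a ∧ σ2 a = a ∧ ∃ d, 0 < d ∧ a.IsHomogeneous d) ∧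
    (σ1 b = b ∧ σ2 b = b ∧ ∃ d, 0 < d ∧ b.IsHomogeneous d) ∧ f = a * b}


open Submodule

section Aux

variable {F : Type} [Field F] {ι : Type}

/-- weighted degree of an exponent vector -/
def wdeg (w : ι → ℕ) (c : ι →₀ ℕ) : ℕ := c.sum fun v k => w v * k

/-- span of monomials of weighted degree < n -/
def Msp (F : Type) [Field F] (w : ι → ℕ) (n : ℕ) : Submodule F (MvPolynomial ι F) :=
  span F ((fun c => (monomial c (1:F))) '' {c | wdeg w c < n})

lemma wdeg_add (w : ι → ℕ) (c c' : ι →₀ ℕ) : wdeg w (c + c') = wdeg w c + wdeg w c' :=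
  Finsupp.sum_add_index' (fun v => mul_zero _) (fun v k k' => mul_add _ _ _)

lemma wdeg_single (w : ι → ℕ) (v : ι) (k : ℕ) : wdeg w (Finsupp.single v k) = w v * k := by
  simp [wdeg, Finsupp.sum_single_index]

lemma Msp_mono {w : ι → ℕ} {n n' : ℕ} (h : n ≤ n') : Msp F w n ≤ Msp F w n' :=
  span_mono (fun q hq => by
    obtain ⟨c, hc, rfl⟩ := hq
    exact ⟨c, lt_of_lt_of_le hc h, rfl⟩)

lemma monomial_mem_Msp {w : ι → ℕ} {n : ℕ} {c : ι →₀ ℕ} (h : wdeg w c < n) (r : F) :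
    monomial c r ∈ Msp F w n := by
  have : monomial c r = r • monomial c (1:F) := by rw [smul_monomial, smul_eq_mul, mul_one]
  rw [this]; exact smul_mem _ _ (subset_span ⟨c, h, rfl⟩)

lemma Msp_mul {w : ι → ℕ} {n k : ℕ} {p q : MvPolynomial ι F}
    (hp : p ∈ Msp F w n) (hq : q ∈ Msp F w k) : p * q ∈ Msp F w (n + k - 1) := by
  induction hp using span_induction with
  | mem x hx =>
    obtain ⟨c, hc, rfl⟩ := hx
    induction hq using span_induction with
    | mem y hy =>
      obtain ⟨c', hc', rfl⟩ := hy
      rw [monomial_mul]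
      have hc1 : wdeg w c < n := hc
      have hc2 : wdeg w c' < k := hc'
      exact monomial_mem_Msp (by rw [wdeg_add]; omega) _
    | zero => simpa using zero_mem _
    | add a b _ _ iha ihb => rw [mul_add]; exact add_mem iha ihb
    | smul r a _ ih => rw [mul_smul_comm]; exact smul_mem _ _ ih
  | zero => simpa using zero_mem _
  | add a b _ _ iha ihb => rw [add_mul]; exact add_mem iha ihb
  | smul r a _ ih => rw [smul_mul_assoc]; exact smul_mem _ _ ih

lemma coeff_eq_zero_of_mem_Msp {w : ι → ℕ} {n : ℕ} {q : MvPolynomial ι F}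
    (hq : q ∈ Msp F w n) {c₀ : ι →₀ ℕ} (h : n ≤ wdeg w c₀) : coeff c₀ q = 0 := by
  induction hq using span_induction with
  | mem x hx =>
    obtain ⟨c, hc, rfl⟩ := hx
    classical
    rw [coeff_monomial, if_neg]
    rintro rfl
    have hc1 : wdeg w c < n := hc
    omega
  | zero => simp
  | add a b _ _ iha ihb => rw [coeff_add, iha, ihb, add_zero]
  | smul r a _ ih => rw [coeff_smul, ih, smul_zero]

lemma span_top_of_triangular {w : ι → ℕ} {B : (ι →₀ ℕ) → MvPolynomial ι F}
    (hB : ∀ c, B c - monomial c 1 ∈ Msp F w (wdeg w c)) :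
    span F (Set.range B) = ⊤ := by
  have key : ∀ n (c : ι →₀ ℕ), wdeg w c ≤ n → monomial c (1:F) ∈ span F (Set.range B) := by
    intro n
    induction n with
    | zero =>
      intro c hc
      have h0 : Msp F w (wdeg w c) ≤ span F (Set.range B) := by
        apply span_le.2; rintro q ⟨c', hc', rfl⟩
        have hc1 : wdeg w c' < wdeg w c := hc'
        omega
      have heq : monomial c (1:F) = B c - (B c - monomial c 1) := by ring
      rw [heq]; exact sub_mem (subset_span ⟨c, rfl⟩) (h0 (hB c))
    | succ n ih =>
      intro c hc
      have h0 : Msp F w (wdeg w c) ≤ span F (Set.range B) := by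
        apply span_le.2; rintro q ⟨c', hc', rfl⟩
        have hc1 : wdeg w c' < wdeg w c := hc'
        exact ih c' (by omega)
      have heq : monomial c (1:F) = B c - (B c - monomial c 1) := by ring
      rw [heq]; exact sub_mem (subset_span ⟨c, rfl⟩) (h0 (hB c))
  rw [eq_top_iff]; intro p _
  rw [as_sum p]
  refine sum_mem fun u _ => ?_
  have : monomial u (coeff u p) = (coeff u p) • monomial u (1:F) := by
    rw [smul_monomial, smul_eq_mul, mul_one]
  rw [this]
  exact smul_mem _ _ (key _ u le_rfl)

lemma linearIndependent_of_triangular {w : ι → ℕ} {B : (ι →₀ ℕ) → MvPolynomial ι F}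
    (hB : ∀ c, B c - monomial c 1 ∈ Msp F w (wdeg w c)) :
    LinearIndependent F B := by
  rw [linearIndependent_iff']
  intro s
  induction s using Finset.strongInduction with
  | _ s ih =>
    classical
    intro f hf c hc
    have hne : s.Nonempty := ⟨c, hc⟩
    obtain ⟨c₀, hc₀s, hmax⟩ := s.exists_max_image (wdeg w) hne
    have hf0 : f c₀ = 0 := by
      have expand : (0:MvPolynomial ι F)
          = ∑ c ∈ s, f c • monomial c 1 + ∑ c ∈ s, f c • (B c - monomial c 1) := by
        rw [← hf, ← Finset.sum_add_distrib]
        apply Finset.sum_congr rfl; intro c _; rw [smul_sub]; ring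
      have h1 : coeff c₀ (∑ c ∈ s, f c • (B c - monomial c 1)) = 0 := by
        rw [coeff_sum]
        refine Finset.sum_eq_zero fun c hcs => ?_
        rw [coeff_smul, coeff_eq_zero_of_mem_Msp (hB c) (hmax c hcs), smul_zero]
      have h2 : coeff c₀ (∑ c ∈ s, f c • monomial c 1) = f c₀ := by
        rw [coeff_sum]
        rw [Finset.sum_eq_single c₀]
        · rw [coeff_smul, coeff_monomial, if_pos rfl, smul_eq_mul, mul_one]
        · intro b _ hb; rw [coeff_smul, coeff_monomial, if_neg hb, smul_zero]
        · intro h; exact absurd hc₀s h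
      have := congrArg (coeff c₀) expand
      rw [coeff_add, h1, h2, add_zero] at this
      simp at this
      exact this.symm
    by_cases hcc : c = c₀
    · rw [hcc]; exact hf0
    · have hcer : c ∈ s.erase c₀ := Finset.mem_erase.2 ⟨hcc, hc⟩
      refine ih (s.erase c₀) (Finset.erase_ssubset hc₀s) f ?_ c hcer
      rw [Finset.sum_erase_eq_sub hc₀s, hf, hf0, zero_smul, sub_zero]

end Aux


lemma Msp_mul_le {F : Type} [Field F] {ι : Type} {w : ι → ℕ} {n k r : ℕ} {p q : MvPolynomial ι F}
    (hp : p ∈ Msp F w n) (hq : q ∈ Msp F w k) (h : n + k - 1 ≤ r) : p * q ∈ Msp F w r :=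
  Msp_mono h (Msp_mul hp hq)
section Concrete
variable (F : Type) [Field F] (m : ℕ) (lam : F)

def wt (m : ℕ) : Fin m ⊕ Fin m → ℕ := Sum.elim (fun _ => 0) (fun _ => 1)

def gfam : Fin m ⊕ Fin m → MvPolynomial (Fin m ⊕ Fin m) F :=
  Sum.elim (fun i => xv F m ((i : ℕ) + 1))
    (fun i => if (i : ℕ) + 1 ≤ m / 2 then Nv F m lam ((i : ℕ) + 1)
      else normYv F m lam ((i : ℕ) + 1))

def efam (m : ℕ) : Fin m ⊕ Fin m → ℕ :=
  Sum.elim (fun _ => 1) (fun i => if (i : ℕ) + 1 ≤ m / 2 then 2 else 4)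

lemma efam_pos (v : Fin m ⊕ Fin m) : 0 < efam m v := by
  rcases v with i | i <;> simp [efam] <;> split <;> norm_num

lemma xv_eq (i : Fin m) : xv F m ((i : ℕ) + 1) = X (Sum.inl i) := by
  have h : 1 ≤ (i : ℕ) + 1 ∧ (i : ℕ) + 1 ≤ m := ⟨Nat.le_add_left 1 i, i.isLt⟩
  rw [xv, dif_pos h]
  congr 1

lemma yv_eq (i : Fin m) : yv F m ((i : ℕ) + 1) = X (Sum.inr i) := by
  have h : 1 ≤ (i : ℕ) + 1 ∧ (i : ℕ) + 1 ≤ m := ⟨Nat.le_add_left 1 i, i.isLt⟩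
  rw [yv, dif_pos h]
  congr 1

lemma X_pow_mem (v : Fin m ⊕ Fin m) (k : ℕ) :
    (X v : MvPolynomial (Fin m ⊕ Fin m) F) ^ k ∈ Msp F (wt m) (wt m v * k + 1) := by
  rw [X_pow_eq_monomial]
  exact monomial_mem_Msp (by rw [wdeg_single]; omega) _

lemma X_mem (v : Fin m ⊕ Fin m) :
    (X v : MvPolynomial (Fin m ⊕ Fin m) F) ∈ Msp F (wt m) (wt m v * 1 + 1) := by
  simpa using X_pow_mem F m v 1

lemma xv_mem (a : ℕ) : xv F m a ∈ Msp F (wt m) 1 := by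
  rw [xv]; split
  · simpa [wt] using X_mem F m (Sum.inl _)
  · exact zero_mem _

lemma yv_mem (a : ℕ) : yv F m a ∈ Msp F (wt m) 2 := by
  rw [yv]; split
  · simpa [wt] using X_mem F m (Sum.inr _)
  · exact zero_mem _

lemma C_mem (r : F) : (C r : MvPolynomial (Fin m ⊕ Fin m) F) ∈ Msp F (wt m) 1 := by
  rw [C_apply]
  refine monomial_mem_Msp ?_ r
  simp [wdeg]

lemma uv_mem (a b : ℕ) : uv F m a b ∈ Msp F (wt m) 2 := by
  rw [uv]
  exact add_mem (Msp_mul_le (xv_mem F m a) (yv_mem F m b) (by norm_num))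
    (Msp_mul_le (xv_mem F m b) (yv_mem F m a) (by norm_num))

lemma hN (i : Fin m) :
    Nv F m lam ((i : ℕ) + 1) - X (Sum.inr i) ^ 2 ∈ Msp F (wt m) 2 := by
  have hy := yv_eq F m i
  have hid : Nv F m lam ((i : ℕ) + 1) - X (Sum.inr i) ^ 2
      = xv F m ((i : ℕ) + 1) * yv F m ((i : ℕ) + 1)
        + C (lam ^ 2 + lam) * ∑ j ∈ Finset.Icc 1 ((i : ℕ) + 1),
            uv F m ((i : ℕ) + 1 - j + 1) ((i : ℕ) + 1 + j)
        + ∑ j ∈ Finset.Icc 1 ((i : ℕ) + 1 - 1),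
            (uv F m ((i : ℕ) + 1 - j) ((i : ℕ) + 1 + j)
              + uv F m ((i : ℕ) + 1 - j) ((i : ℕ) + 1 + j - 1)) := by
    rw [Nv, nv, hy]; ring
  rw [hid]
  refine add_mem (add_mem ?_ ?_) ?_
  · exact Msp_mul_le (xv_mem F m _) (yv_mem F m _) (by norm_num)
  · exact Msp_mul_le (C_mem F m _) (sum_mem fun j _ => uv_mem F m _ _) (by norm_num)
  · exact sum_mem fun j _ => add_mem (uv_mem F m _ _) (uv_mem F m _ _)

lemma hNorm (i : Fin m) :
    normYv F m lam ((i : ℕ) + 1) - X (Sum.inr i) ^ 4 ∈ Msp F (wt m) 4 := by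
  have hy := yv_eq F m i
  set p1 := xv F m ((i : ℕ) + 1) with hp1
  set p2 := C lam * xv F m ((i : ℕ) + 1) + xv F m ((i : ℕ) + 1 - 1) with hp2
  set p3 := C (lam + 1) * xv F m ((i : ℕ) + 1) + xv F m ((i : ℕ) + 1 - 1) with hp3
  have hid : normYv F m lam ((i : ℕ) + 1) - X (Sum.inr i) ^ 4
      = (p1 + p2 + p3) * X (Sum.inr i) ^ 3
        + (p1 * p2 + p1 * p3 + p2 * p3) * X (Sum.inr i) ^ 2
        + (p1 * p2 * p3) * X (Sum.inr i) := by
    rw [normYv, hy, hp1, hp2, hp3]; ring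
  have hm1 : p1 ∈ Msp F (wt m) 1 := xv_mem F m _
  have hm2 : p2 ∈ Msp F (wt m) 1 :=
    add_mem (Msp_mul_le (C_mem F m lam) (xv_mem F m _) (by norm_num)) (xv_mem F m _)
  have hm3 : p3 ∈ Msp F (wt m) 1 :=
    add_mem (Msp_mul_le (C_mem F m _) (xv_mem F m _) (by norm_num)) (xv_mem F m _)
  have hy3 : (X (Sum.inr i) : MvPolynomial (Fin m ⊕ Fin m) F) ^ 3 ∈ Msp F (wt m) 4 := by
    simpa [wt] using X_pow_mem F m (Sum.inr i) 3
  have hy2 : (X (Sum.inr i) : MvPolynomial (Fin m ⊕ Fin m) F) ^ 2 ∈ Msp F (wt m) 3 := by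
    simpa [wt] using X_pow_mem F m (Sum.inr i) 2
  have hy1 : (X (Sum.inr i) : MvPolynomial (Fin m ⊕ Fin m) F) ∈ Msp F (wt m) 2 := by
    simpa [wt] using X_mem F m (Sum.inr i)
  have h12 : p1 * p2 ∈ Msp F (wt m) 1 := Msp_mul_le hm1 hm2 (by norm_num)
  have h13 : p1 * p3 ∈ Msp F (wt m) 1 := Msp_mul_le hm1 hm3 (by norm_num)
  have h23 : p2 * p3 ∈ Msp F (wt m) 1 := Msp_mul_le hm2 hm3 (by norm_num)
  rw [hid]
  refine add_mem (add_mem ?_ ?_) ?_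
  · exact Msp_mul_le (add_mem (add_mem hm1 hm2) hm3) hy3 (by norm_num)
  · exact Msp_mul_le (add_mem (add_mem h12 h13) h23) hy2 (by norm_num)
  · have h123 : p1 * p2 * p3 ∈ Msp F (wt m) 1 := Msp_mul_le h12 hm3 (by norm_num)
    exact Msp_mul_le h123 hy1 (by norm_num)

lemma gfam_err (v : Fin m ⊕ Fin m) :
    gfam F m lam v - X v ^ (efam m v) ∈ Msp F (wt m) (wt m v * efam m v) := by
  rcases v with i | i
  · have : gfam F m lam (Sum.inl i) - X (Sum.inl i) ^ (efam m (Sum.inl i)) = 0 := by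
      simp [gfam, efam, xv_eq]
    rw [this]; exact zero_mem _
  · by_cases h : (i : ℕ) + 1 ≤ m / 2
    · have h1 : gfam F m lam (Sum.inr i) = Nv F m lam ((i : ℕ) + 1) := by simp only [gfam, Sum.elim_inr, if_pos h]
      have h2 : efam m (Sum.inr i) = 2 := by simp only [efam, Sum.elim_inr, if_pos h]
      rw [h1, h2]
      exact Msp_mono (by simp [wt]) (hN F m lam i)
    · have h1 : gfam F m lam (Sum.inr i) = normYv F m lam ((i : ℕ) + 1) := by simp only [gfam, Sum.elim_inr, if_neg h]
      have h2 : efam m (Sum.inr i) = 4 := by simp only [efam, Sum.elim_inr, if_neg h]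
      rw [h1, h2]
      exact Msp_mono (by simp [wt]) (hNorm F m lam i)

lemma factor_err (v : Fin m ⊕ Fin m) (a d : ℕ) :
    gfam F m lam v ^ a * X v ^ d - X v ^ (efam m v * a + d)
      ∈ Msp F (wt m) (wt m v * (efam m v * a + d)) := by
  induction a with
  | zero => simp
  | succ a ih =>
    have hsplit : (efam m v * (a + 1) + d) = efam m v + (efam m v * a + d) := by ring
    have hid : gfam F m lam v ^ (a + 1) * X v ^ d - X v ^ (efam m v * (a + 1) + d)
        = X v ^ efam m v * (gfam F m lam v ^ a * X v ^ d - X v ^ (efam m v * a + d))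
          + (gfam F m lam v - X v ^ efam m v) * X v ^ (efam m v * a + d)
          + (gfam F m lam v - X v ^ efam m v)
              * (gfam F m lam v ^ a * X v ^ d - X v ^ (efam m v * a + d)) := by
      rw [hsplit, pow_add]; ring
    have harith : wt m v * (efam m v * (a + 1) + d)
        = wt m v * efam m v + wt m v * (efam m v * a + d) := by ring
    rw [hid]
    refine add_mem (add_mem ?_ ?_) ?_
    · exact Msp_mul_le (X_pow_mem F m v (efam m v)) ih (by omega)
    · exact Msp_mul_le (gfam_err F m lam v) (X_pow_mem F m v _) (by omega)
    · exact Msp_mul_le (gfam_err F m lam v) ih (by omega)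

def Bfam (c : (Fin m ⊕ Fin m) →₀ ℕ) : MvPolynomial (Fin m ⊕ Fin m) F :=
  ∏ v, gfam F m lam v ^ (c v / efam m v) * X v ^ (c v % efam m v)

lemma prod_err (c : (Fin m ⊕ Fin m) →₀ ℕ) (t : Finset (Fin m ⊕ Fin m)) :
    ((∏ v ∈ t, X v ^ (c v) : MvPolynomial (Fin m ⊕ Fin m) F)
        ∈ Msp F (wt m) ((∑ v ∈ t, wt m v * c v) + 1)) ∧
    ((∏ v ∈ t, gfam F m lam v ^ (c v / efam m v) * X v ^ (c v % efam m v))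
        - ∏ v ∈ t, X v ^ (c v) ∈ Msp F (wt m) (∑ v ∈ t, wt m v * c v)) := by
  classical
  induction t using Finset.induction with
  | empty =>
    constructor
    · have h := monomial_mem_Msp (F := F) (w := wt m) (n := 1) (c := 0) (by simp [wdeg]) (1 : F)
      rw [← C_apply, C_1] at h; simpa using h
    · simpa using zero_mem _
  | @insert j t hj ih =>
    rw [Finset.prod_insert hj, Finset.prod_insert hj, Finset.sum_insert hj]
    have hfac : gfam F m lam j ^ (c j / efam m j) * X j ^ (c j % efam m j)
        - X j ^ (c j) ∈ Msp F (wt m) (wt m j * c j) := by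
      have := factor_err F m lam j (c j / efam m j) (c j % efam m j)
      rwa [Nat.div_add_mod] at this
    constructor
    · exact Msp_mul_le (X_pow_mem F m j (c j)) ih.1 (by omega)
    · have hid : (gfam F m lam j ^ (c j / efam m j) * X j ^ (c j % efam m j))
            * (∏ v ∈ t, gfam F m lam v ^ (c v / efam m v) * X v ^ (c v % efam m v))
          - X j ^ (c j) * ∏ v ∈ t, X v ^ (c v)
        = X j ^ (c j) * ((∏ v ∈ t, gfam F m lam v ^ (c v / efam m v) * X v ^ (c v % efam m v))
              - ∏ v ∈ t, X v ^ (c v))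
          + (gfam F m lam j ^ (c j / efam m j) * X j ^ (c j % efam m j) - X j ^ (c j))
              * (∏ v ∈ t, X v ^ (c v))
          + (gfam F m lam j ^ (c j / efam m j) * X j ^ (c j % efam m j) - X j ^ (c j))
              * ((∏ v ∈ t, gfam F m lam v ^ (c v / efam m v) * X v ^ (c v % efam m v))
                  - ∏ v ∈ t, X v ^ (c v)) := by ring
      rw [hid]
      refine add_mem (add_mem ?_ ?_) ?_
      · exact Msp_mul_le (X_pow_mem F m j (c j)) ih.2 (by omega)
      · exact Msp_mul_le hfac ih.1 (by omega)
      · exact Msp_mul_le hfac ih.2 (by omega)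

lemma hB (c : (Fin m ⊕ Fin m) →₀ ℕ) :
    Bfam F m lam c - monomial c 1 ∈ Msp F (wt m) (wdeg (wt m) c) := by
  have h1 : (monomial c 1 : MvPolynomial (Fin m ⊕ Fin m) F) = ∏ v, X v ^ (c v) := by
    have h0 : ∏ v ∈ c.support, (X v : MvPolynomial (Fin m ⊕ Fin m) F) ^ c v
        = ∏ v, X v ^ c v :=
      Finset.prod_subset (Finset.subset_univ _) (fun v _ hv => by
        rw [Finsupp.notMem_support_iff.1 hv, pow_zero])
    rw [← h0, prod_X_pow_eq_monomial]
  have h2 : wdeg (wt m) c = ∑ v, wt m v * c v :=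
    Finsupp.sum_fintype _ _ (fun v => mul_zero _)
  rw [Bfam, h1, h2]
  exact (prod_err F m lam c Finset.univ).2

end Concrete

section Bridge0
end Bridge0

section Concrete2
variable (F : Type) [Field F] (m : ℕ) (lam : F)

/-- exponent combination map -/
def psi (m : ℕ) (a : (Fin m ⊕ Fin m) →₀ ℕ) (d : Fin m → ℕ) : (Fin m ⊕ Fin m) →₀ ℕ :=
  Finsupp.equivFunOnFinite.symm (fun v => efam m v * a v + Sum.elim (fun _ => 0) d v)

lemma psi_apply (a : (Fin m ⊕ Fin m) →₀ ℕ) (d : Fin m → ℕ) (v : Fin m ⊕ Fin m) :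
    psi m a d v = efam m v * a v + Sum.elim (fun _ => 0) d v := by
  simp [psi]

/-- boundedness of the remainder -/
def dbound (m : ℕ) (d : Fin m → ℕ) : Prop :=
  ∀ i : Fin m, d i ≤ if (i : ℕ) + 1 ≤ m / 2 then 1 else 3

lemma dlt {m : ℕ} {d : Fin m → ℕ} (hd : dbound m d) (v : Fin m ⊕ Fin m) :
    Sum.elim (fun _ => 0) d v < efam m v := by
  rcases v with i | i
  · simp [efam]
  · have h1 := hd i
    by_cases h : (i : ℕ) + 1 ≤ m / 2
    · rw [if_pos h] at h1; simp only [efam, Sum.elim_inr, if_pos h]; omega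
    · rw [if_neg h] at h1; simp only [efam, Sum.elim_inr, if_neg h]; omega

lemma psi_div {d : Fin m → ℕ} (hd : dbound m d) (a : (Fin m ⊕ Fin m) →₀ ℕ)
    (v : Fin m ⊕ Fin m) : psi m a d v / efam m v = a v := by
  rw [psi_apply, Nat.mul_add_div (efam_pos m v), Nat.div_eq_of_lt (dlt hd v), add_zero]

lemma psi_mod {d : Fin m → ℕ} (hd : dbound m d) (a : (Fin m ⊕ Fin m) →₀ ℕ)
    (v : Fin m ⊕ Fin m) : psi m a d v % efam m v = Sum.elim (fun _ => 0) d v := by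
  rw [psi_apply, Nat.mul_add_mod, Nat.mod_eq_of_lt (dlt hd v)]

/-- product of generators -/
def Pr (a : (Fin m ⊕ Fin m) →₀ ℕ) : MvPolynomial (Fin m ⊕ Fin m) F :=
  ∏ v, gfam F m lam v ^ a v

lemma Bfam_psi {d : Fin m → ℕ} (hd : dbound m d) (a : (Fin m ⊕ Fin m) →₀ ℕ) :
    Bfam F m lam (psi m a d) = Pr F m lam a * ∏ i : Fin m, X (Sum.inr i) ^ d i := by
  rw [Bfam, Finset.prod_mul_distrib]
  congr 1
  · exact Finset.prod_congr rfl fun v _ => by rw [psi_div m hd]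
  · rw [Fintype.prod_sum_type]
    have h1 : ∀ i : Fin m, (X (Sum.inl i) : MvPolynomial (Fin m ⊕ Fin m) F)
        ^ (psi m a d (Sum.inl i) % efam m (Sum.inl i)) = 1 := by
      intro i; rw [psi_mod m hd]; simp
    have h2 : ∀ i : Fin m, (X (Sum.inr i) : MvPolynomial (Fin m ⊕ Fin m) F)
        ^ (psi m a d (Sum.inr i) % efam m (Sum.inr i)) = X (Sum.inr i) ^ d i := by
      intro i; rw [psi_mod m hd]; simp
    rw [Finset.prod_congr rfl fun i _ => h1 i, Finset.prod_congr rfl fun i _ => h2 i]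
    rw [Finset.prod_const_one, one_mul]

lemma psi_inj {d d' : Fin m → ℕ} (hd : dbound m d) (hd' : dbound m d')
    {a a' : (Fin m ⊕ Fin m) →₀ ℕ} (h : psi m a d = psi m a' d') : a = a' ∧ d = d' := by
  constructor
  · ext v
    rw [← psi_div m hd a v, ← psi_div m hd' a' v, h]
  · funext i
    have := congrArg (fun c : (Fin m ⊕ Fin m) →₀ ℕ => c (Sum.inr i) % efam m (Sum.inr i)) h
    simpa [psi_mod m hd, psi_mod m hd'] using this

lemma Pr_single (v : Fin m ⊕ Fin m) : Pr F m lam (Finsupp.single v 1) = gfam F m lam v := by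
  rw [Pr, Finset.prod_eq_single v]
  · simp
  · intro u _ hu; simp [Finsupp.single_apply, Ne.symm hu]
  · simp

lemma Pr_add (a b : (Fin m ⊕ Fin m) →₀ ℕ) :
    Pr F m lam (a + b) = Pr F m lam a * Pr F m lam b := by
  rw [Pr, Pr, Pr, ← Finset.prod_mul_distrib]
  exact Finset.prod_congr rfl fun v _ => by rw [Finsupp.add_apply, pow_add]

lemma adjoin_le_span_Pr :
    (Algebra.adjoin F (Set.range (gfam F m lam)) : Set (MvPolynomial (Fin m ⊕ Fin m) F))
      ⊆ (span F (Set.range (Pr F m lam)) : Set (MvPolynomial (Fin m ⊕ Fin m) F)) := by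
  intro z hz
  have h1 : z ∈ Subalgebra.toSubmodule (Algebra.adjoin F (Set.range (gfam F m lam))) := hz
  rw [Algebra.adjoin_eq_span] at h1
  refine span_le.2 ?_ h1
  intro y hy
  have : y ∈ Set.range (Pr F m lam) := by
    induction (hy : y ∈ Submonoid.closure (Set.range (gfam F m lam))) using
        Submonoid.closure_induction with
    | mem z hz => obtain ⟨v, rfl⟩ := hz; exact ⟨Finsupp.single v 1, Pr_single F m lam v⟩
    | one => exact ⟨0, by simp [Pr]⟩
    | mul a b _ _ iha ihb =>
      obtain ⟨a1, rfl⟩ := iha; obtain ⟨a2, rfl⟩ := ihb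
      exact ⟨a1 + a2, Pr_add F m lam a1 a2⟩
  exact subset_span this


end Concrete2

section Bridge
variable (F : Type) [Field F] (m : ℕ) (lam : F)

lemma Bfam_li : LinearIndependent F (Bfam F m lam) :=
  linearIndependent_of_triangular (hB F m lam)

lemma Bfam_span : span F (Set.range (Bfam F m lam)) = ⊤ :=
  span_top_of_triangular (hB F m lam)

end Bridge
section Main
variable (F : Type) [Field F] (m : ℕ) (lam : F)

lemma dbound_zero : dbound m (fun _ => 0) := fun i => by split <;> norm_num

lemma dbound_mod (c : (Fin m ⊕ Fin m) →₀ ℕ) :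
    dbound m (fun i => c (Sum.inr i) % efam m (Sum.inr i)) := by
  intro i
  have h1 : c (Sum.inr i) % efam m (Sum.inr i) < efam m (Sum.inr i) :=
    Nat.mod_lt _ (efam_pos m _)
  have h2 : efam m (Sum.inr i) = if (i : ℕ) + 1 ≤ m / 2 then 2 else 4 := rfl
  show c (Sum.inr i) % efam m (Sum.inr i) ≤ _
  rw [h2] at h1 ⊢
  by_cases h : (i : ℕ) + 1 ≤ m / 2
  · simp only [if_pos h] at h1 ⊢; omega
  · simp only [if_neg h] at h1 ⊢; omega

lemma psi_recon (c : (Fin m ⊕ Fin m) →₀ ℕ) :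
    psi m (Finsupp.equivFunOnFinite.symm fun v => c v / efam m v)
      (fun i => c (Sum.inr i) % efam m (Sum.inr i)) = c := by
  ext v
  rw [psi_apply]
  rcases v with i | i
  · simp [efam]
  · simp only [Finsupp.coe_equivFunOnFinite_symm, Sum.elim_inr]
    exact Nat.div_add_mod _ _

lemma aeval_monomial_B (c : (Fin m ⊕ Fin m) →₀ ℕ) (r : F) :
    aeval (gfam F m lam) (monomial c r) = r • Bfam F m lam (psi m c (fun _ => 0)) := by
  rw [Bfam_psi F m lam (dbound_zero m) c]
  simp only [pow_zero, Finset.prod_const_one, mul_one]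
  rw [aeval_monomial, algebraMap_eq, ← smul_eq_C_mul]
  congr 1
  rw [Finsupp.prod_fintype _ _ (fun v => pow_zero _)]
  rfl

lemma alg_indep : AlgebraicIndependent F (gfam F m lam) := by
  rw [algebraicIndependent_iff]
  intro p hp
  have expand : aeval (gfam F m lam) p
      = ∑ c ∈ p.support, coeff c p • Bfam F m lam (psi m c (fun _ => 0)) := by
    conv_lhs => rw [as_sum p]
    rw [map_sum]
    exact Finset.sum_congr rfl fun c _ => aeval_monomial_B F m lam c _
  have hinj : Function.Injective (fun c : (Fin m ⊕ Fin m) →₀ ℕ => psi m c (fun _ => 0)) :=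
    fun a a' h => (psi_inj m (dbound_zero m) (dbound_zero m) h).1
  have li2 : LinearIndependent F (fun c => Bfam F m lam (psi m c (fun _ => 0))) :=
    (Bfam_li F m lam).comp _ hinj
  have h0 := linearIndependent_iff'.1 li2 p.support (fun c => coeff c p)
    (by rw [← expand, hp])
  apply MvPolynomial.ext
  intro c
  rw [coeff_zero]
  by_cases hc : c ∈ p.support
  · exact h0 c hc
  · exact notMem_support_iff.1 hc

def yprod (d : Fin m → ℕ) : MvPolynomial (Fin m ⊕ Fin m) F := ∏ i : Fin m, X (Sum.inr i) ^ d i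

lemma Pr_mem_adjoin (a : (Fin m ⊕ Fin m) →₀ ℕ) :
    Pr F m lam a ∈ Algebra.adjoin F (Set.range (gfam F m lam)) :=
  Subalgebra.prod_mem _ fun v _ =>
    pow_mem (Algebra.subset_adjoin (Set.mem_range_self v)) _

lemma yprod_span :
    Submodule.span (Algebra.adjoin F (Set.range (gfam F m lam)))
      (Set.range (fun d : {d : Fin m → ℕ // dbound m d} => yprod F m d.1)) = ⊤ := by
  rw [eq_top_iff]
  intro s hTop
  clear hTop
  have hs : s ∈ span F (Set.range (Bfam F m lam)) := by rw [Bfam_span]; trivial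
  induction hs using span_induction with
  | mem x hx =>
    obtain ⟨c, rfl⟩ := hx
    have hd := dbound_mod m c
    have hsplit : Bfam F m lam c
        = Pr F m lam (Finsupp.equivFunOnFinite.symm fun v => c v / efam m v)
          * yprod F m (fun i => c (Sum.inr i) % efam m (Sum.inr i)) := by
      conv_lhs => rw [← psi_recon m c]
      exact Bfam_psi F m lam hd _
    rw [hsplit]
    have hmem := Pr_mem_adjoin F m lam (Finsupp.equivFunOnFinite.symm fun v => c v / efam m v)
    have : Pr F m lam (Finsupp.equivFunOnFinite.symm fun v => c v / efam m v)
          * yprod F m (fun i => c (Sum.inr i) % efam m (Sum.inr i))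
        = (⟨_, hmem⟩ : Algebra.adjoin F (Set.range (gfam F m lam)))
          • yprod F m (fun i => c (Sum.inr i) % efam m (Sum.inr i)) := rfl
    rw [this]
    exact Submodule.smul_mem _ _ (subset_span ⟨⟨_, hd⟩, rfl⟩)
  | zero => exact zero_mem _
  | add a b _ _ iha ihb => exact add_mem iha ihb
  | smul r x _ ih =>
    rw [← algebraMap_smul (Algebra.adjoin F (Set.range (gfam F m lam))) r x]
    exact Submodule.smul_mem _ _ ih

lemma yprod_li :
    LinearIndependent (Algebra.adjoin F (Set.range (gfam F m lam)))
      (fun d : {d : Fin m → ℕ // dbound m d} => yprod F m d.1) := by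
  classical
  rw [linearIndependent_iff']
  intro s f hrel d hd
  have hmem : ∀ d' : {d : Fin m → ℕ // dbound m d},
      ((f d' : Algebra.adjoin F (Set.range (gfam F m lam))) : MvPolynomial (Fin m ⊕ Fin m) F)
        ∈ span F (Set.range (Pr F m lam)) :=
    fun d' => adjoin_le_span_Pr F m lam (f d').2
  choose γ hγ using fun d' => Finsupp.mem_span_range_iff_exists_finsupp.1 (hmem d')
  set T : Finset (((Fin m ⊕ Fin m) →₀ ℕ) × {d : Fin m → ℕ // dbound m d}) :=
    s.biUnion (fun d' => (γ d').support.image (fun a => (a, d'))) with hT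
  have hBP : LinearIndependent F (fun p : ((Fin m ⊕ Fin m) →₀ ℕ) × {d : Fin m → ℕ // dbound m d} =>
      Bfam F m lam (psi m p.1 p.2.1)) := by
    apply (Bfam_li F m lam).comp
    intro p q h
    obtain ⟨h1, h2⟩ := psi_inj m p.2.2 q.2.2 h
    exact Prod.ext h1 (Subtype.ext h2)
  have hsum : ∑ p ∈ T, (γ p.2) p.1 • Bfam F m lam (psi m p.1 p.2.1) = 0 := by
    rw [hT, Finset.sum_biUnion]
    · have hinner : ∀ d' ∈ s,
          (∑ p ∈ (γ d').support.image (fun a => (a, d')), (γ p.2) p.1 • Bfam F m lam (psi m p.1 p.2.1))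
            = f d' • yprod F m d'.1 := by
        intro d' _
        rw [Finset.sum_image (fun a _ b _ h => (Prod.ext_iff.1 h).1)]
        have : ∀ a ∈ (γ d').support,
            (γ d') a • Bfam F m lam (psi m a d'.1) = ((γ d') a • Pr F m lam a) * yprod F m d'.1 := by
          intro a _
          simp only [yprod]
          rw [Bfam_psi F m lam d'.2 a]
          exact (smul_mul_assoc _ _ _).symm
        rw [Finset.sum_congr rfl this, ← Finset.sum_mul]
        have hc : (∑ a ∈ (γ d').support, (γ d') a • Pr F m lam a)
            = ((f d' : Algebra.adjoin F (Set.range (gfam F m lam))) : MvPolynomial (Fin m ⊕ Fin m) F) :=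
          hγ d'
        rw [hc]
        rfl
      rw [Finset.sum_congr rfl hinner, hrel]
    · intro d1 _ d2 _ hne
      simp only [Finset.disjoint_left, Finset.mem_image]
      rintro p ⟨a1, _, rfl⟩ ⟨a2, _, hp2⟩
      exact hne (congrArg Prod.snd hp2).symm
  have hzero := linearIndependent_iff'.1 hBP T (fun p => (γ p.2) p.1) hsum
  have hγd : γ d = 0 := by
    ext a
    by_cases ha : a ∈ (γ d).support
    · exact hzero (a, d) (Finset.mem_biUnion.2 ⟨d, hd, Finset.mem_image.2 ⟨a, ha, rfl⟩⟩)
    · exact Finsupp.notMem_support_iff.1 ha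
  have hfd : ((f d : Algebra.adjoin F (Set.range (gfam F m lam)))
      : MvPolynomial (Fin m ⊕ Fin m) F) = 0 := by
    rw [← hγ d, hγd]; simp
  exact Subtype.ext hfd
end Main

theorem stmt_4 (F : Type) [Field F] [CharP F 2] (m : ℕ) (hm : 2 ≤ m) (lam : F)
    (σ1 σ2 : MvPolynomial (Fin m ⊕ Fin m) F ≃ₐ[F] MvPolynomial (Fin m ⊕ Fin m) F)
    (hσ1x : ∀ i, σ1 (xv F m i) = xv F m i)
    (hσ2x : ∀ i, σ2 (xv F m i) = xv F m i)
    (hσ1y : ∀ i, 1 ≤ i → i ≤ m → σ1 (yv F m i) = yv F m i + xv F m i)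
    (hσ2y1 : σ2 (yv F m 1) = yv F m 1 + C lam * xv F m 1)
    (hσ2y : ∀ i, 2 ≤ i → i ≤ m → σ2 (yv F m i) = yv F m i + C lam * xv F m i + xv F m (i - 1)) :
    AlgebraicIndependent F
      (Sum.elim (fun i : Fin m => xv F m ((i : ℕ) + 1))
        (fun i : Fin m => if (i : ℕ) + 1 ≤ m / 2 then Nv F m lam ((i : ℕ) + 1)
          else normYv F m lam ((i : ℕ) + 1))) ∧
    ∃ b : Module.Basis {d : Fin m → ℕ // ∀ i : Fin m, d i ≤ if (i : ℕ) + 1 ≤ m / 2 then 1 else 3}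
        ↥(Algebra.adjoin F (Set.range (Sum.elim (fun i : Fin m => xv F m ((i : ℕ) + 1))
          (fun i : Fin m => if (i : ℕ) + 1 ≤ m / 2 then Nv F m lam ((i : ℕ) + 1)
            else normYv F m lam ((i : ℕ) + 1)))))
        (MvPolynomial (Fin m ⊕ Fin m) F),
      ∀ d, (b d : MvPolynomial (Fin m ⊕ Fin m) F)
        = ∏ i : Fin m, yv F m ((i : ℕ) + 1) ^ (d.1 i) := by
  constructor
  · exact alg_indep F m lam
  · refine ⟨Module.Basis.mk (yprod_li F m lam) (yprod_span F m lam).ge, ?_⟩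
    intro d
    refine (Module.Basis.mk_apply (yprod_li F m lam) (yprod_span F m lam).ge d).trans ?_
    simp only [yprod]
    exact Finset.prod_congr rfl fun i _ => by rw [yv_eq]
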